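/- On the Lie algebra rr'_{3,0} with structure equations de^2 = -e^1∧e^3, de^3 = e^1∧e^2, de^1 = de^4 = 0, and complex structure J defined on the dual coframe by Je^1=e^4, Je^2=e^3 (so Je^4=-e^1, Je^3=-e^2), there is no lcK structure: every 2-form Ω with dΩ = θ∧Ω for some nonzero closed 1-form θ satisfies Ω(e_2, Je_2) = 0, hence fails positivity. -/

import Mathlib

/-- On `rr'_{3,0}` (brackets `[e1,e2] = -e3`, `[e1,e3] = e2`) with the complex
structure `J e1 = e4, J e2 = e3`, there is no lcK structure: any 2-form `Ω` with
`dΩ = θ ∧ Ω` for some nonzero closed 1-form `θ` satisfies `Ω(e2, Je2) = 0`,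
hence fails positivity. -/
theorem stmt5 (L : Type*) [LieRing L] [LieAlgebra ℝ L]
    (b : Module.Basis (Fin 4) ℝ L)
    (h01 : ⁅b 0, b 1⁆ = -(b 2)) (h02 : ⁅b 0, b 2⁆ = b 1) (h03 : ⁅b 0, b 3⁆ = 0)
    (h12 : ⁅b 1, b 2⁆ = 0) (h13 : ⁅b 1, b 3⁆ = 0) (h23 : ⁅b 2, b 3⁆ = 0)
    (J : L →ₗ[ℝ] L)
    (hJ0 : J (b 0) = b 3) (hJ1 : J (b 1) = b 2)
    (hJ2 : J (b 2) = -(b 1)) (hJ3 : J (b 3) = -(b 0)) :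
    ∀ θ : L →ₗ[ℝ] ℝ, θ ≠ 0 → (∀ x y : L, θ ⁅x, y⁆ = 0) →
    ∀ Ω : L →ₗ[ℝ] L →ₗ[ℝ] ℝ, (∀ x y : L, Ω x y = - Ω y x) →
      (∀ x y z : L, -Ω ⁅x, y⁆ z + Ω ⁅x, z⁆ y - Ω ⁅y, z⁆ x
          = θ x * Ω y z - θ y * Ω x z + θ z * Ω x y) →
      Ω (b 1) (J (b 1)) = 0 ∧ ¬ (∀ x : L, x ≠ 0 → 0 < Ω x (J x)) := by
  intro θ hθ hθcl Ω hskew hd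
  have hxx : ∀ x : L, Ω x x = 0 := fun x => by linarith [hskew x x]
  have hθ1 : θ (b 1) = 0 := by have := hθcl (b 0) (b 2); rwa [h02] at this
  have hθ2 : θ (b 2) = 0 := by
    have := hθcl (b 0) (b 1); rw [h01] at this; simpa using this
  have h31 : ⁅b 3, b 1⁆ = 0 := by rw [← lie_skew, h13]; simp
  have h32 : ⁅b 3, b 2⁆ = 0 := by rw [← lie_skew, h23]; simp
  have e0 : θ (b 0) * Ω (b 1) (b 2) = 0 := by
    have := hd (b 0) (b 1) (b 2)
    rw [h01, h12, h02] at this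
    simp [hxx, hθ1, hθ2] at this
    exact mul_eq_zero.mpr this
  have e3 : θ (b 3) * Ω (b 1) (b 2) = 0 := by
    have := hd (b 3) (b 1) (b 2)
    rw [h31, h12, h32] at this
    simp [hθ1, hθ2] at this
    exact mul_eq_zero.mpr this
  have hΩ12 : Ω (b 1) (b 2) = 0 := by
    by_contra hne
    apply hθ
    apply b.ext
    intro i
    fin_cases i
    · simpa using mul_eq_zero.mp e0 |>.resolve_right hne
    · simpa using hθ1
    · simpa using hθ2
    · simpa using mul_eq_zero.mp e3 |>.resolve_right hne
  refine ⟨by rw [hJ1, hΩ12], fun h => ?_⟩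
  have := h (b 1) (b.ne_zero 1)
  rw [hJ1, hΩ12] at this
  exact lt_irrefl 0 this
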